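/- Fix n ≥ 2, N ≥ 1, and integers 1 ≤ a ≤ b ≤ n−1 with a + b ≥ n. Let E' be the set of n × N Boolean measurement matrices all of whose columns have Hamming weight a−1, a, or b+1. Then E' is a multidimensional fooling set for the block interval function Π_{[a,b]}^N: for any two distinct matrices M₁, M₂ ∈ E' with Π_{[a,b]}^N(M₁) = Π_{[a,b]}^N(M₂), there exists a row index i* such that replacing row i* of one matrix by row i* of the other yields a matrix M* with Π_{[a,b]}^N(M*) ≠ Π_{[a,b]}^N(M₁). -/

import Mathlib

/-- The Hamming weight of the `j`-th column of an `n × N` Boolean measurement matrix. -/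
def colWeight {n N : ℕ} (M : Fin n → Fin N → Bool) (j : Fin N) : ℕ :=
  (Finset.univ.filter fun i => M i j = true).card

/-- The block interval function `Π_{[a,b]}^N`: its `j`-th coordinate is `1` iff the `j`-th
column of `M` has between `a` and `b` ones. -/
def blockInterval {n N : ℕ} (a b : ℕ) (M : Fin n → Fin N → Bool) : Fin N → Bool :=
  fun j => decide (a ≤ colWeight M j ∧ colWeight M j ≤ b)

lemma colWeight_update_dec {n N : ℕ} (M : Fin n → Fin N → Bool) (i : Fin n)
    (r : Fin N → Bool) (j : Fin N) (h1 : M i j = true) (h2 : r j = false) :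
    colWeight (Function.update M i r) j = colWeight M j - 1 := by
  unfold colWeight
  have hset : (Finset.univ.filter fun i' => Function.update M i r i' j = true)
      = (Finset.univ.filter fun i' => M i' j = true).erase i := by
    ext x
    by_cases hx : x = i <;> simp [Function.update, hx, h2, h1]
  rw [hset, Finset.card_erase_of_mem (by simp [h1])]

lemma colWeight_update_inc {n N : ℕ} (M : Fin n → Fin N → Bool) (i : Fin n)
    (r : Fin N → Bool) (j : Fin N) (h1 : M i j = false) (h2 : r j = true) :
    colWeight (Function.update M i r) j = colWeight M j + 1 := by
  unfold colWeight
  have hset : (Finset.univ.filter fun i' => Function.update M i r i' j = true)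
      = insert i (Finset.univ.filter fun i' => M i' j = true) := by
    ext x
    by_cases hx : x = i <;> simp [Function.update, hx, h2, h1]
  rw [hset, Finset.card_insert_of_notMem (by simp [h1])]

lemma exists_true_false {n N : ℕ} (M₁ M₂ : Fin n → Fin N → Bool) (j : Fin N)
    (hw : colWeight M₂ j ≤ colWeight M₁ j) (hd : ∃ i, M₁ i j ≠ M₂ i j) :
    ∃ i, M₁ i j = true ∧ M₂ i j = false := by
  by_contra h
  push_neg at h
  have hsub : (Finset.univ.filter fun i => M₁ i j = true)
      ⊆ (Finset.univ.filter fun i => M₂ i j = true) := by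
    intro x hx
    simp only [Finset.mem_filter, Finset.mem_univ, true_and] at hx ⊢
    by_contra h2
    exact absurd (h x hx) (by simp [Bool.not_eq_false] at h2 ⊢; exact h2)
  have := Finset.eq_of_subset_of_card_le hsub hw
  obtain ⟨i, hi⟩ := hd
  apply hi
  have : (i ∈ Finset.univ.filter fun i => M₁ i j = true)
      ↔ (i ∈ Finset.univ.filter fun i => M₂ i j = true) := by rw [this]
  simp only [Finset.mem_filter, Finset.mem_univ, true_and] at this
  cases h1 : M₁ i j <;> cases h2 : M₂ i j <;> simp_all

/-- For `a + b ≥ n`, the set of measurement matrices all of whose columns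
have Hamming weight `a−1`, `a` or `b+1` is a multidimensional fooling set for the block
interval function `Π_{[a,b]}^N`. -/
theorem interval_fooling_set_high (n N a b : ℕ)
    (hn : 2 ≤ n) (hN : 1 ≤ N) (ha : 1 ≤ a) (hab : a ≤ b) (hb : b ≤ n - 1)
    (hsum : n ≤ a + b)
    (M₁ M₂ : Fin n → Fin N → Bool)
    (h₁ : ∀ j, colWeight M₁ j = a - 1 ∨ colWeight M₁ j = a ∨ colWeight M₁ j = b + 1)
    (h₂ : ∀ j, colWeight M₂ j = a - 1 ∨ colWeight M₂ j = a ∨ colWeight M₂ j = b + 1)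
    (hne : M₁ ≠ M₂)
    (heq : blockInterval a b M₁ = blockInterval a b M₂) :
    ∃ i : Fin n,
      blockInterval a b (Function.update M₁ i (M₂ i)) ≠ blockInterval a b M₁ ∨
      blockInterval a b (Function.update M₂ i (M₁ i)) ≠ blockInterval a b M₁ := by
  -- find a column where they differ
  have hdiff : ∃ j i, M₁ i j ≠ M₂ i j := by
    by_contra h
    push_neg at h
    exact hne (funext fun i => funext fun j => h j i)
  obtain ⟨j, hdj⟩ := hdiff
  have heqj : blockInterval a b M₁ j = blockInterval a b M₂ j := congrFun heq j
  simp only [blockInterval, decide_eq_decide] at heqj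
  have w1 := h₁ j
  have w2 := h₂ j
  -- cases on weights
  rcases w1 with w1 | w1 | w1 <;> rcases w2 with w2 | w2 | w2
  · -- a-1, a-1 : equal weights, differ; find i with M₂ true M₁ false, raise M₁ to a
    obtain ⟨i, hi1, hi2⟩ := exists_true_false M₂ M₁ j (by omega)
      (by obtain ⟨i, hi⟩ := hdj; exact ⟨i, Ne.symm hi⟩)
    refine ⟨i, Or.inl fun hcon => ?_⟩
    have := congrFun hcon j
    rw [show blockInterval a b (Function.update M₁ i (M₂ i)) j
        = decide (a ≤ colWeight M₁ j + 1 ∧ colWeight M₁ j + 1 ≤ b) by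
      simp [blockInterval, colWeight_update_inc M₁ i (M₂ i) j hi2 hi1]] at this
    simp only [blockInterval, decide_eq_decide] at this
    omega
  · exact absurd heqj (by omega)
  · -- a-1, b+1 : raise M₁
    obtain ⟨i, hi1, hi2⟩ := exists_true_false M₂ M₁ j (by omega)
      (by obtain ⟨i, hi⟩ := hdj; exact ⟨i, Ne.symm hi⟩)
    refine ⟨i, Or.inl fun hcon => ?_⟩
    have := congrFun hcon j
    rw [show blockInterval a b (Function.update M₁ i (M₂ i)) j
        = decide (a ≤ colWeight M₁ j + 1 ∧ colWeight M₁ j + 1 ≤ b) by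
      simp [blockInterval, colWeight_update_inc M₁ i (M₂ i) j hi2 hi1]] at this
    simp only [blockInterval, decide_eq_decide] at this
    omega
  · exact absurd heqj (by omega)
  · -- a, a : lower M₁ to a-1
    obtain ⟨i, hi1, hi2⟩ := exists_true_false M₁ M₂ j (by omega) hdj
    refine ⟨i, Or.inl fun hcon => ?_⟩
    have := congrFun hcon j
    rw [show blockInterval a b (Function.update M₁ i (M₂ i)) j
        = decide (a ≤ colWeight M₁ j - 1 ∧ colWeight M₁ j - 1 ≤ b) by
      simp [blockInterval, colWeight_update_dec M₁ i (M₂ i) j hi1 hi2]] at this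
    simp only [blockInterval, decide_eq_decide] at this
    omega
  · exact absurd heqj (by omega)
  · -- b+1, a-1 : raise M₂ to a
    obtain ⟨i, hi1, hi2⟩ := exists_true_false M₁ M₂ j (by omega)
      (by obtain ⟨i, hi⟩ := hdj; exact ⟨i, hi⟩)
    refine ⟨i, Or.inr fun hcon => ?_⟩
    have := congrFun hcon j
    rw [show blockInterval a b (Function.update M₂ i (M₁ i)) j
        = decide (a ≤ colWeight M₂ j + 1 ∧ colWeight M₂ j + 1 ≤ b) by
      simp [blockInterval, colWeight_update_inc M₂ i (M₁ i) j hi2 hi1]] at this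
    simp only [blockInterval, decide_eq_decide] at this
    omega
  · exact absurd heqj (by omega)
  · -- b+1, b+1 : lower M₁ to b
    obtain ⟨i, hi1, hi2⟩ := exists_true_false M₁ M₂ j (by omega) hdj
    refine ⟨i, Or.inl fun hcon => ?_⟩
    have := congrFun hcon j
    rw [show blockInterval a b (Function.update M₁ i (M₂ i)) j
        = decide (a ≤ colWeight M₁ j - 1 ∧ colWeight M₁ j - 1 ≤ b) by
      simp [blockInterval, colWeight_update_dec M₁ i (M₂ i) j hi1 hi2]] at this
    simp only [blockInterval, decide_eq_decide] at this
    omega
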